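/- Let λ be a peak partition. Then {sort(T) : T ∈ SPYCT(α) for some peak composition α with λ(α) = λ} = SPYT(λ); that is, the image under the column-sorting map sort of the union of the sets SPYCT(α) over all peak compositions α whose decreasing rearrangement is λ equals the set of standard peak Young tableaux of shape λ. -/

import Mathlib

namespace PaperSPIT

/-- The `j`-th part (1-indexed) of a composition presented as a list. -/
def part (α : List ℕ) (j : ℕ) : ℕ := α.getD (j - 1) 0

/-- The largest part. -/
def maxPart (α : List ℕ) : ℕ := α.foldr max 0

/-- The composition diagram: boxes `(i, j)` (column `i`, row `j`), both 1-indexed,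
rows numbered from bottom to top. -/
def cd (α : List ℕ) : Finset (ℕ × ℕ) :=
  (Finset.Icc 1 (maxPart α) ×ˢ Finset.Icc 1 α.length).filter fun p => p.1 ≤ part α p.2

/-- `α` is a composition of `n`. -/
def IsComposition (n : ℕ) (α : List ℕ) : Prop :=
  (∀ a ∈ α, 0 < a) ∧ α.sum = n

/-- `α` is a peak composition of `n`: all parts except possibly the last are `> 1`. -/
def IsPeakComposition (n : ℕ) (α : List ℕ) : Prop :=
  IsComposition n α ∧ ∀ i, i + 1 < α.length → 1 < α.getD i 0

/-- A standard filling of `cd α`: a bijection from the boxes onto `{1, …, n}`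
(normalized to be `0` off the diagram). -/
def IsStandardFilling (α : List ℕ) (T : ℕ × ℕ → ℕ) : Prop :=
  Set.BijOn T (cd α : Set (ℕ × ℕ)) (Set.Icc 1 α.sum) ∧
  ∀ p : ℕ × ℕ, p ∉ cd α → T p = 0

def RowsIncrease (α : List ℕ) (T : ℕ × ℕ → ℕ) : Prop :=
  ∀ i j : ℕ, (i, j) ∈ cd α → (i + 1, j) ∈ cd α → T (i, j) < T (i + 1, j)

def RowsWeaklyIncrease (α : List ℕ) (T : ℕ × ℕ → ℕ) : Prop :=
  ∀ i j : ℕ, (i, j) ∈ cd α → (i + 1, j) ∈ cd α → T (i, j) ≤ T (i + 1, j)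

def FirstColIncreases (α : List ℕ) (T : ℕ × ℕ → ℕ) : Prop :=
  ∀ j : ℕ, (1, j) ∈ cd α → (1, j + 1) ∈ cd α → T (1, j) < T (1, j + 1)

/-- Standard immaculate tableau. -/
def IsSIT (α : List ℕ) (T : ℕ × ℕ → ℕ) : Prop :=
  IsStandardFilling α T ∧ RowsIncrease α T ∧ FirstColIncreases α T

/-- Peak-tableau condition: for every `1 ≤ k ≤ n` the boxes with entries `≤ k`
form the diagram of a peak composition. -/
def PeakCond (α : List ℕ) (T : ℕ × ℕ → ℕ) : Prop :=
  ∀ k : ℕ, 1 ≤ k → k ≤ α.sum → ∃ β : List ℕ,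
    IsPeakComposition k β ∧ (cd α).filter (fun p => T p ≤ k) = cd β

/-- Standard peak immaculate tableau. -/
def IsSPIT (α : List ℕ) (T : ℕ × ℕ → ℕ) : Prop := IsSIT α T ∧ PeakCond α T

def SPITset (α : List ℕ) : Set (ℕ × ℕ → ℕ) := {T | IsSPIT α T}

/-- The Young triple condition. -/
def YoungTriple (α : List ℕ) (T : ℕ × ℕ → ℕ) : Prop :=
  ∀ k i j : ℕ, i < j → (k, j) ∈ cd α → (k + 1, i) ∈ cd α → T (k, j) ≤ T (k + 1, i) →
    (k + 1, j) ∈ cd α ∧ T (k + 1, j) < T (k + 1, i)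

/-- Standard Young composition tableau. -/
def IsSYCT (α : List ℕ) (T : ℕ × ℕ → ℕ) : Prop :=
  IsStandardFilling α T ∧ RowsIncrease α T ∧ FirstColIncreases α T ∧ YoungTriple α T

def SYCTset (α : List ℕ) : Set (ℕ × ℕ → ℕ) := {T | IsSYCT α T}

/-- Standard peak Young composition tableau. -/
def IsSPYCT (α : List ℕ) (T : ℕ × ℕ → ℕ) : Prop := IsSYCT α T ∧ PeakCond α T

def SPYCTset (α : List ℕ) : Set (ℕ × ℕ → ℕ) := {T | IsSPYCT α T}

/-- Row reading word `w_r`: rows from top to bottom, each row left to right. -/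
def wR (α : List ℕ) (T : ℕ × ℕ → ℕ) : List ℕ :=
  ((List.range α.length).reverse.map fun j =>
    (List.range (part α (j + 1))).map fun i => T (i + 1, j + 1)).flatten

/-- The `i`-th column of a filling, read bottom to top. -/
def colList (α : List ℕ) (T : ℕ × ℕ → ℕ) (i : ℕ) : List ℕ :=
  ((List.range α.length).filter fun j => decide (i ≤ part α (j + 1))).map
    fun j => T (i, j + 1)

/-- Column reading word `w_c`: columns left to right, each column bottom to top. -/
def wC (α : List ℕ) (T : ℕ × ℕ → ℕ) : List ℕ :=
  ((List.range (maxPart α)).map fun i => colList α T (i + 1)).flatten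

/-- Young reading word `w_Y`: first column top to bottom, then subsequent columns
bottom to top, columns left to right. -/
def wY (α : List ℕ) (T : ℕ × ℕ → ℕ) : List ℕ :=
  (colList α T 1).reverse ++
    ((List.range (maxPart α - 1)).map fun i => colList α T (i + 2)).flatten

/-- Descent set of a word with distinct letters: `i` such that `i` and `i+1` occur
and `i` occurs to the right of `i+1`. -/
def DesWord (w : List ℕ) : Finset ℕ :=
  w.toFinset.filter fun i => (i + 1) ∈ w ∧ w.idxOf (i + 1) < w.idxOf i


/-- Columns increase from bottom to top. -/
def ColsIncrease (l : List ℕ) (T : ℕ × ℕ → ℕ) : Prop :=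
  ∀ i j : ℕ, (i, j) ∈ cd l → (i, j + 1) ∈ cd l → T (i, j) < T (i, j + 1)

/-- A standard Young tableau of (partition) shape `l`. -/
def IsSYT (l : List ℕ) (T : ℕ × ℕ → ℕ) : Prop :=
  IsStandardFilling l T ∧ RowsIncrease l T ∧ ColsIncrease l T

/-- The set of standard peak Young tableaux of shape `l`. -/
def SPYTset (l : List ℕ) : Set (ℕ × ℕ → ℕ) := {T | IsSYT l T ∧ PeakCond l T}

/-- The column-sorting map: the filling of `cd l` whose `i`-th column consists of the
entries of the `i`-th column of `T` arranged in increasing order from bottom to top. -/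
def colSortTo (l α : List ℕ) (T : ℕ × ℕ → ℕ) : ℕ × ℕ → ℕ := fun p =>
  if p ∈ cd l then
    ((((cd α).filter fun q => q.1 = p.1).image T).sort (· ≤ ·)).getD (p.2 - 1) 0
  else 0

/-- number of parts of `α` that are `≥ i` (column length of column `i`). -/
def c (α : List ℕ) (i : ℕ) : ℕ := α.countP (fun a => decide (i ≤ a))

lemma le_maxPart {α : List ℕ} {a : ℕ} (h : a ∈ α) : a ≤ maxPart α := by
  induction α with
  | nil => simp at h
  | cons x xs ih =>
      have hm : maxPart (x :: xs) = max x (maxPart xs) := rfl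
      rcases List.mem_cons.mp h with h | h
      · subst h; rw [hm]; exact le_max_left _ _
      · rw [hm]; exact (ih h).trans (le_max_right _ _)

lemma part_mem {α : List ℕ} {j : ℕ} (h1 : 1 ≤ j) (h2 : j ≤ α.length) :
    part α j ∈ α := by
  have hj : j - 1 < α.length := by omega
  unfold part
  rw [List.getD_eq_getElem _ _ hj]
  exact List.getElem_mem _

lemma mem_cd {α : List ℕ} {i j : ℕ} :
    (i, j) ∈ cd α ↔ 1 ≤ i ∧ 1 ≤ j ∧ j ≤ α.length ∧ i ≤ part α j := by
  simp only [cd, Finset.mem_filter, Finset.mem_product, Finset.mem_Icc]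
  constructor
  · rintro ⟨⟨⟨h1, _⟩, h2, h3⟩, h4⟩
    exact ⟨h1, h2, h3, h4⟩
  · rintro ⟨h1, h2, h3, h4⟩
    exact ⟨⟨⟨h1, h4.trans (le_maxPart (part_mem h2 h3))⟩, h2, h3⟩, h4⟩

lemma mem_cd' {α : List ℕ} {p : ℕ × ℕ} :
    p ∈ cd α ↔ 1 ≤ p.1 ∧ 1 ≤ p.2 ∧ p.2 ≤ α.length ∧ p.1 ≤ part α p.2 := by
  obtain ⟨i, j⟩ := p; exact mem_cd

lemma c_anti {α : List ℕ} {i i' : ℕ} (h : i ≤ i') : c α i' ≤ c α i := by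
  unfold c
  apply List.countP_mono_left
  intro a _ ha
  simp only [decide_eq_true_eq] at *
  omega

lemma c_perm {α β : List ℕ} (h : α.Perm β) (i : ℕ) : c α i = c β i :=
  h.countP_eq _

lemma c_le_length (α : List ℕ) (i : ℕ) : c α i ≤ α.length :=
  List.countP_le_length

lemma c_cons (x : ℕ) (xs : List ℕ) (i : ℕ) :
    c (x :: xs) i = (if i ≤ x then 1 else 0) + c xs i := by
  unfold c
  rw [List.countP_cons]
  by_cases h : i ≤ x <;> simp [h] <;> omega

/-- column `i` of the diagram of a sorted list. -/
lemma mem_cd_sorted {l : List ℕ} (hs : l.Pairwise (· ≥ ·)) (hpos : ∀ a ∈ l, 0 < a)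
    {i j : ℕ} (hi : 1 ≤ i) (hj : 1 ≤ j) :
    (i, j) ∈ cd l ↔ j ≤ c l i := by
  rw [mem_cd]
  induction l generalizing j with
  | nil => simp [c, part]; omega
  | cons x xs ih =>
      obtain ⟨hx, hs'⟩ := List.pairwise_cons.mp hs
      have hpos' : ∀ a ∈ xs, 0 < a := fun a ha => hpos a (List.mem_cons_of_mem _ ha)
      have hczero : ¬ i ≤ x → c xs i = 0 := by
        intro hix
        unfold c
        rw [List.countP_eq_zero]
        intro a ha
        simp only [decide_eq_true_eq]
        have := hx a ha
        omega
      rcases Nat.lt_or_ge j 2 with hj1 | hj2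
      · have hj1' : j = 1 := by omega
        subst hj1'
        have hpart : part (x :: xs) 1 = x := rfl
        rw [hpart]
        constructor
        · rintro ⟨-, -, -, h4⟩
          rw [c_cons, if_pos h4]
          omega
        · intro h
          by_cases hix : i ≤ x
          · exact ⟨hi, le_rfl, by simp, hix⟩
          · rw [c_cons, if_neg hix, hczero hix] at h
            omega
      · have hpart : part (x :: xs) j = part xs (j - 1) := by
          unfold part
          have h2 : j - 1 = (j - 2) + 1 := by omega
          rw [h2, List.getD_cons_succ]
          norm_num
        have ihj := ih hs' hpos' (by omega : 1 ≤ j - 1)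
        rw [hpart, c_cons]
        simp only [List.length_cons]
        constructor
        · rintro ⟨-, -, h3, h4⟩
          have : j - 1 ≤ c xs i := ihj.mp ⟨hi, by omega, by omega, h4⟩
          by_cases hix : i ≤ x
          · rw [if_pos hix]; omega
          · -- then part xs (j-1) ∈ xs is ≤ x < i, contradiction with h4
            have hmem := part_mem (by omega : 1 ≤ j - 1) (by omega : j - 1 ≤ xs.length)
            have := hx _ hmem
            omega
        · intro h
          by_cases hix : i ≤ x
          · rw [if_pos hix] at h
            have : j - 1 ≤ c xs i := by omega
            obtain ⟨-, -, h3, h4⟩ := ihj.mpr this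
            exact ⟨hi, by omega, by omega, h4⟩
          · rw [if_neg hix, hczero hix] at h
            omega

lemma getD_set_eq {l : List ℕ} {m v : ℕ} (h : m < l.length) :
    (l.set m v).getD m 0 = v := by
  simp [List.getD_eq_getElem?_getD, List.getElem?_set, h]

lemma getD_set_ne {l : List ℕ} {m k v : ℕ} (h : m ≠ k) :
    (l.set m v).getD k 0 = l.getD k 0 := by
  simp [List.getD_eq_getElem?_getD, List.getElem?_set, h]

lemma part_set_eq {l : List ℕ} {j₀ v : ℕ} (h1 : 1 ≤ j₀) (h2 : j₀ ≤ l.length) :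
    part (l.set (j₀ - 1) v) j₀ = v :=
  getD_set_eq (by omega)

lemma part_set_ne {l : List ℕ} {j₀ j v : ℕ} (h1 : 1 ≤ j₀) (h2 : 1 ≤ j) (h : j ≠ j₀) :
    part (l.set (j₀ - 1) v) j = part l j :=
  getD_set_ne (by omega)

lemma length_set' (l : List ℕ) (m v : ℕ) : (l.set m v).length = l.length :=
  List.length_set ..

lemma part_append_lt {l : List ℕ} {x j : ℕ} (h1 : 1 ≤ j) (h2 : j ≤ l.length) :
    part (l ++ [x]) j = part l j := by
  unfold part
  exact List.getD_append _ _ _ _ (by omega)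

lemma part_append_last {l : List ℕ} {x : ℕ} :
    part (l ++ [x]) (l.length + 1) = x := by
  unfold part
  rw [List.getD_append_right _ _ _ _ (by omega)]
  simp

/-- decomposition of a list and its `set` as multisets. -/
lemma multiset_set {l : List ℕ} {m v : ℕ} (h : m < l.length) :
    ∃ M : Multiset ℕ, (↑l : Multiset ℕ) = l.getD m 0 ::ₘ M ∧
      (↑(l.set m v) : Multiset ℕ) = v ::ₘ M := by
  refine ⟨↑(l.take m ++ l.drop (m + 1)), ?_, ?_⟩
  · conv_lhs => rw [← List.take_append_drop m l, List.drop_eq_getElem_cons h]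
    rw [List.getD_eq_getElem _ _ h, Multiset.cons_coe, Multiset.coe_eq_coe]
    exact List.perm_middle
  · rw [List.set_eq_take_cons_drop _ h, Multiset.cons_coe, Multiset.coe_eq_coe]
    exact List.perm_middle

lemma multiset_append_singleton (l : List ℕ) (x : ℕ) :
    (↑(l ++ [x]) : Multiset ℕ) = x ::ₘ ↑l := by
  rw [Multiset.cons_coe, Multiset.coe_eq_coe]
  exact List.perm_append_singleton _ _

/-- `cd` determines the composition (given positive parts). -/
lemma cd_inj {β γ : List ℕ} (hβ : ∀ a ∈ β, 0 < a) (hγ : ∀ a ∈ γ, 0 < a)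
    (h : cd β = cd γ) : β = γ := by
  have key : ∀ (δ ε : List ℕ), (∀ a ∈ δ, 0 < a) → cd δ = cd ε →
      ∀ j, 1 ≤ j → j ≤ δ.length → j ≤ ε.length ∧ part δ j ≤ part ε j := by
    intro δ ε hδ hcd j hj1 hj2
    have hpart : 1 ≤ part δ j := hδ _ (part_mem hj1 hj2)
    have h1 : (part δ j, j) ∈ cd δ := mem_cd.mpr ⟨hpart, hj1, hj2, le_rfl⟩
    rw [hcd] at h1
    obtain ⟨-, -, h3, h4⟩ := mem_cd.mp h1
    exact ⟨h3, h4⟩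
  have hlen : β.length = γ.length := by
    rcases Nat.eq_zero_or_pos β.length with h0 | h0
    · rcases Nat.eq_zero_or_pos γ.length with h1 | h1
      · omega
      · have := (key γ β hγ h.symm γ.length h1 le_rfl).1
        omega
    · have h2 := (key β γ hβ h β.length h0 le_rfl).1
      rcases Nat.eq_zero_or_pos γ.length with h1 | h1
      · omega
      · have h3 := (key γ β hγ h.symm γ.length h1 le_rfl).1
        omega
  apply List.ext_getElem hlen
  intro m hm1 hm2
  have h1 := (key β γ hβ h (m + 1) (by omega) (by omega)).2
  have h2 := (key γ β hγ h.symm (m + 1) (by omega) (by omega)).2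
  have e1 : part β (m + 1) = β[m] := List.getD_eq_getElem _ _ hm1
  have e2 : part γ (m + 1) = γ[m] := List.getD_eq_getElem _ _ hm2
  omega

lemma col_image {α : List ℕ} {i : ℕ} (hi : 1 ≤ i) :
    (cd α).filter (fun p => p.1 = i) =
      ((Finset.Icc 1 α.length).filter (fun j => i ≤ part α j)).image (fun j => (i, j)) := by
  ext p
  obtain ⟨x, y⟩ := p
  simp only [Finset.mem_filter, Finset.mem_image, Finset.mem_Icc, mem_cd]
  constructor
  · rintro ⟨⟨h1, h2, h3, h4⟩, h5⟩
    subst h5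
    exact ⟨y, ⟨⟨h2, h3⟩, h4⟩, rfl⟩
  · rintro ⟨j, ⟨⟨hj1, hj2⟩, hj3⟩, hj4⟩
    obtain ⟨rfl, rfl⟩ : i = x ∧ j = y := by
      constructor <;> { have := congrArg Prod.fst hj4; have := congrArg Prod.snd hj4; simp_all }
    exact ⟨⟨hi, hj1, hj2, hj3⟩, rfl⟩

lemma card_filter_Icc_countP (l : List ℕ) (i : ℕ) :
    ((Finset.Icc 1 l.length).filter (fun j => i ≤ part l j)).card = c l i := by
  induction l using List.reverseRecOn with
  | nil => simp [c]
  | append_singleton xs x ih =>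
      have hlen : (xs ++ [x]).length = xs.length + 1 := by simp
      have hIcc : Finset.Icc 1 (xs.length + 1) =
          insert (xs.length + 1) (Finset.Icc 1 xs.length) := by
        ext k
        simp only [Finset.mem_Icc, Finset.mem_insert]
        omega
      have hc : c (xs ++ [x]) i = c xs i + (if i ≤ x then 1 else 0) := by
        unfold c
        rw [List.countP_append]
        congr 1
        by_cases h : i ≤ x <;> simp [h]
      rw [hlen, hIcc, Finset.filter_insert, hc]
      have hfc : (Finset.Icc 1 xs.length).filter (fun j => i ≤ part (xs ++ [x]) j) =
          (Finset.Icc 1 xs.length).filter (fun j => i ≤ part xs j) := by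
        apply Finset.filter_congr
        intro j hj
        rw [Finset.mem_Icc] at hj
        rw [part_append_lt hj.1 hj.2]
      have hlast : part (xs ++ [x]) (xs.length + 1) = x := part_append_last
      by_cases h : i ≤ x
      · rw [if_pos (by rw [hlast]; exact h), Finset.card_insert_of_notMem, hfc, ih, if_pos h]
        intro hmem
        have := (Finset.mem_filter.mp hmem).1
        rw [Finset.mem_Icc] at this
        omega
      · rw [if_neg (by rw [hlast]; exact h), hfc, ih, if_neg h]
        omega

lemma card_col {α : List ℕ} {i : ℕ} (hi : 1 ≤ i) :
    ((cd α).filter (fun p => p.1 = i)).card = c α i := by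
  rw [col_image hi, Finset.card_image_of_injective _ (fun a b hab => by
    simpa using hab), card_filter_Icc_countP]

/-- a peak composition has at most one part equal to 1. -/
lemma peak_countP_le_one {k : ℕ} {β : List ℕ} (h : IsPeakComposition k β) :
    β.countP (fun a => decide (a = 1)) ≤ 1 := by
  obtain ⟨-, hpk⟩ := h
  induction β with
  | nil => simp
  | cons x xs ih =>
      rcases List.eq_nil_or_concat xs with rfl | ⟨ys, y, rfl⟩
      · by_cases h : x = 1 <;> simp [List.countP_cons, h]
      · have hx : 1 < x := by
          have := hpk 0 (by simp)
          simpa using this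
        have hxs : (ys.concat y).countP (fun a => decide (a = 1)) ≤ 1 := by
          apply ih
          intro i hi
          have := hpk (i + 1) (by simp at hi ⊢; omega)
          simpa using this
        rw [List.countP_cons]
        simp only [decide_eq_true_eq]
        rw [if_neg (by omega)]
        omega

/-- a sorted positive list with at most one part equal to 1 is a peak composition shape. -/
lemma peak_of_sorted {l : List ℕ} (hs : l.Pairwise (· ≥ ·)) (hpos : ∀ a ∈ l, 0 < a)
    (h1 : l.countP (fun a => decide (a = 1)) ≤ 1) :
    ∀ i, i + 1 < l.length → 1 < l.getD i 0 := by
  induction l with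
  | nil => simp
  | cons x xs ih =>
      obtain ⟨hx, hs'⟩ := List.pairwise_cons.mp hs
      have hpos' : ∀ a ∈ xs, 0 < a := fun a ha => hpos a (List.mem_cons_of_mem _ ha)
      intro i hi
      simp only [List.length_cons] at hi
      by_cases hx1 : x = 1
      · -- then all of xs are 1 and xs nonempty, contradiction with count
        exfalso
        have hxsne : xs ≠ [] := by
          intro hnil
          rw [hnil] at hi
          simp at hi
        obtain ⟨y, ys, rfl⟩ := List.exists_cons_of_ne_nil hxsne
        have hy : y = 1 := by
          have h1' := hx y (List.mem_cons_self)
          have h2' := hpos' y (List.mem_cons_self)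
          omega
        rw [List.countP_cons, List.countP_cons] at h1
        simp [hx1, hy] at h1
      · cases i with
        | zero =>
            have := hpos x (List.mem_cons_self)
            simp only [List.getD_cons_zero]
            omega
        | succ m =>
            rw [List.getD_cons_succ]
            apply ih hs' hpos'
            · rw [List.countP_cons] at h1
              omega
            · omega

/-- sorting a finset after inserting a new maximum. -/
lemma sort_insert_max {s : Finset ℕ} {a : ℕ} (h : ∀ b ∈ s, b < a) :
    (insert a s).sort (· ≤ ·) = s.sort (· ≤ ·) ++ [a] := by
  have ha : a ∉ s := fun hmem => lt_irrefl a (h a hmem)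
  have hperm : ((insert a s).sort (· ≤ ·)).Perm (s.sort (· ≤ ·) ++ [a]) := by
    rw [← Multiset.coe_eq_coe]
    have h1 : ((insert a s).sort (· ≤ ·) : Multiset ℕ) = (insert a s).val := Finset.sort_eq _ _
    have h2 : ((s.sort (· ≤ ·) ++ [a] : List ℕ) : Multiset ℕ) = (insert a s).val := by
      rw [multiset_append_singleton, Finset.sort_eq, Finset.insert_val,
        Multiset.ndinsert_of_notMem ha]
    rw [h1, h2]
  have hsorted2 : (s.sort (· ≤ ·) ++ [a]).Pairwise (· ≤ ·) := by
    rw [List.pairwise_append]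
    refine ⟨Finset.pairwise_sort _ _, List.pairwise_singleton _ _, ?_⟩
    intro b hb y hy
    rw [List.mem_singleton] at hy
    subst hy
    exact le_of_lt (h b ((Finset.mem_sort _).mp hb))
  exact hperm.eq_of_pairwise' (Finset.pairwise_sort _ _) hsorted2

section Steps

variable {α β l l' : List ℕ} {T T' U U' : ℕ × ℕ → ℕ} {b : ℕ × ℕ} {n : ℕ}

lemma sf_mem_Icc (h : IsStandardFilling α T) {p : ℕ × ℕ} (hp : p ∈ cd α) :
    1 ≤ T p ∧ T p ≤ α.sum := by
  have := h.1.mapsTo hp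
  rw [Set.mem_Icc] at this
  exact this

/-- removing the maximal entry from a SPYCT. -/
lemma SPYCT_remove (hT : IsSPYCT α T) (hsum : α.sum = n) (hn : 1 ≤ n)
    (hb : b ∈ cd α) (hTb : T b = n)
    (hβsum : β.sum = n - 1)
    (hcd : cd β = (cd α).erase b) :
    IsSPYCT β (Function.update T b 0) := by
  obtain ⟨⟨hSF, hRI, hFC, hYT⟩, hPC⟩ := hT
  have hsub : ∀ q ∈ cd β, q ∈ cd α ∧ q ≠ b := by
    intro q hq
    rw [hcd, Finset.mem_erase] at hq
    exact ⟨hq.2, hq.1⟩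
  have hag : ∀ q ∈ cd β, Function.update T b 0 q = T q := by
    intro q hq
    exact Function.update_of_ne (hsub q hq).2 _ _
  have hne : ∀ q ∈ cd β, T q ≠ n := by
    intro q hq hqn
    exact (hsub q hq).2 (hSF.1.injOn (hsub q hq).1 hb (by rw [hqn, hTb]))
  refine ⟨⟨⟨⟨?_, ?_, ?_⟩, ?_⟩, ?_, ?_, ?_⟩, ?_⟩
  · -- MapsTo
    intro q hq
    rw [Set.mem_Icc, hβsum]
    have hq' : q ∈ cd β := hq
    have h1 := sf_mem_Icc ⟨hSF.1, hSF.2⟩ (hsub q hq').1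
    rw [hag q hq']
    have := hne q hq'
    omega
  · -- InjOn
    intro q hq r hr hqr
    rw [hag q hq, hag r hr] at hqr
    exact hSF.1.injOn (hsub q hq).1 (hsub r hr).1 hqr
  · -- SurjOn
    intro y hy
    rw [Set.mem_Icc, hβsum] at hy
    obtain ⟨q, hq, hqy⟩ := hSF.1.surjOn (Set.mem_Icc.mpr ⟨hy.1, by omega⟩ : y ∈ Set.Icc 1 α.sum)
    have hqb : q ≠ b := by
      intro h
      rw [h, hTb] at hqy
      omega
    have hqβ : q ∈ cd β := by
      rw [hcd, Finset.mem_erase]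
      exact ⟨hqb, hq⟩
    exact ⟨q, hqβ, by rw [hag q hqβ]; exact hqy⟩
  · -- off diagram zero
    intro p hp
    by_cases hpb : p = b
    · rw [hpb, Function.update_self]
    · rw [Function.update_of_ne hpb]
      apply hSF.2
      intro hpα
      exact hp (by rw [hcd, Finset.mem_erase]; exact ⟨hpb, hpα⟩)
  · -- RowsIncrease
    intro i j h1 h2
    rw [hag _ h1, hag _ h2]
    exact hRI i j (hsub _ h1).1 (hsub _ h2).1
  · -- FirstColIncreases
    intro j h1 h2
    rw [hag _ h1, hag _ h2]
    exact hFC j (hsub _ h1).1 (hsub _ h2).1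
  · -- YoungTriple
    intro k i j hij h1 h2 h3
    rw [hag _ h1, hag _ h2] at h3
    obtain ⟨h4, h5⟩ := hYT k i j hij (hsub _ h1).1 (hsub _ h2).1 h3
    have h6 : (k + 1, j) ≠ b := by
      intro h
      rw [h, hTb] at h5
      have := (sf_mem_Icc ⟨hSF.1, hSF.2⟩ (hsub _ h2).1).2
      omega
    have h7 : (k + 1, j) ∈ cd β := by
      rw [hcd, Finset.mem_erase]
      exact ⟨h6, h4⟩
    refine ⟨h7, ?_⟩
    rw [hag _ h7, hag _ h2]
    exact h5
  · -- PeakCond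
    intro k hk1 hk2
    rw [hβsum] at hk2
    have heq : (cd β).filter (fun p => Function.update T b 0 p ≤ k) =
        (cd α).filter (fun p => T p ≤ k) := by
      ext q
      simp only [Finset.mem_filter]
      constructor
      · rintro ⟨hq, hq2⟩
        rw [hag q hq] at hq2
        exact ⟨(hsub q hq).1, hq2⟩
      · rintro ⟨hq, hq2⟩
        have hqb : q ≠ b := by
          intro h
          rw [h, hTb] at hq2
          omega
        have hqβ : q ∈ cd β := by rw [hcd, Finset.mem_erase]; exact ⟨hqb, hq⟩
        exact ⟨hqβ, by rw [hag q hqβ]; exact hq2⟩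
    rw [heq]
    exact hPC k hk1 (by omega)

/-- adding a new maximal entry to a SPYCT. -/
lemma SPYCT_add {α' : List ℕ} (hT' : IsSPYCT α' T') (hsum' : α'.sum = n - 1)
    (hsum : α.sum = n) (hn : 1 ≤ n)
    (hcd : cd α = insert b (cd α')) (hbnot : b ∉ cd α')
    (hpk : IsPeakComposition n α)
    (hdom : ∀ j, b.2 < j → (b.1 - 1, j) ∈ cd α → (b.1, j) ∈ cd α)
    (hnr : (b.1 + 1, b.2) ∉ cd α)
    (hntop : b.1 = 1 → (1, b.2 + 1) ∉ cd α) :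
    IsSPYCT α (Function.update T' b n) := by
  obtain ⟨⟨hSF, hRI, hFC, hYT⟩, hPC⟩ := hT'
  set T := Function.update T' b n with hTdef
  have hTb : T b = n := Function.update_self _ _ _
  have hag : ∀ q ∈ cd α', T q = T' q := fun q hq =>
    Function.update_of_ne (fun h => hbnot (by rw [← h]; exact hq)) _ _
  have hmem : ∀ q ∈ cd α, q = b ∨ (q ∈ cd α' ∧ q ≠ b) := by
    intro q hq
    rw [hcd, Finset.mem_insert] at hq
    rcases hq with h | h
    · exact Or.inl h
    · exact Or.inr ⟨h, fun hh => hbnot (hh ▸ h)⟩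
  have hlt : ∀ q ∈ cd α', T q < n := by
    intro q hq
    rw [hag q hq]
    have := (sf_mem_Icc ⟨hSF.1, hSF.2⟩ hq).2
    omega
  refine ⟨⟨⟨⟨?_, ?_, ?_⟩, ?_⟩, ?_, ?_, ?_⟩, ?_⟩
  · -- MapsTo
    intro q hq
    rw [Set.mem_Icc, hsum]
    rcases hmem q hq with rfl | ⟨hq', -⟩
    · rw [hTb]; omega
    · have h1 := (sf_mem_Icc ⟨hSF.1, hSF.2⟩ hq').1
      have h2 := hlt q hq'
      rw [hag q hq'] at h2 ⊢
      omega
  · -- InjOn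
    intro q hq r hr hqr
    rcases hmem q hq with rfl | ⟨hq', hqb⟩ <;> rcases hmem r hr with rfl | ⟨hr', hrb⟩
    · rfl
    · rw [hTb] at hqr; exact absurd hqr.symm (Nat.ne_of_lt (hlt r hr'))
    · rw [hTb] at hqr; exact absurd hqr (Nat.ne_of_lt (hlt q hq'))
    · rw [hag q hq', hag r hr'] at hqr
      exact hSF.1.injOn hq' hr' hqr
  · -- SurjOn
    intro y hy
    rw [Set.mem_Icc, hsum] at hy
    rcases Nat.eq_or_lt_of_le hy.2 with rfl | hlt'
    · exact ⟨b, by rw [hcd]; exact Finset.mem_insert_self _ _, hTb⟩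
    · obtain ⟨q, hq, hqy⟩ := hSF.1.surjOn
        (Set.mem_Icc.mpr ⟨hy.1, by omega⟩ : y ∈ Set.Icc 1 α'.sum)
      refine ⟨q, by rw [hcd]; exact Finset.mem_insert_of_mem hq, ?_⟩
      rw [hag q hq]; exact hqy
  · -- off diagram
    intro p hp
    have hpb : p ≠ b := fun h => hp (h ▸ (by rw [hcd]; exact Finset.mem_insert_self _ _))
    rw [hTdef, Function.update_of_ne hpb]
    exact hSF.2 p (fun h => hp (by rw [hcd]; exact Finset.mem_insert_of_mem h))
  · -- RowsIncrease
    intro i j h1 h2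
    rcases hmem _ h2 with h2b | ⟨h2', h2b⟩
    · -- right box is b
      rcases hmem _ h1 with h1b | ⟨h1', -⟩
      · exfalso; have := h1b.trans h2b.symm; simp at this
      · rw [h2b, hTb]
        exact hlt _ h1'
    · rcases hmem _ h1 with h1b | ⟨h1', -⟩
      · -- left box is b: impossible, box right of b
        exact absurd (h1b ▸ h2) hnr
      · rw [hag _ h1', hag _ h2']
        exact hRI i j h1' h2'
  · -- FirstColIncreases
    intro j h1 h2
    rcases hmem _ h2 with h2b | ⟨h2', h2b⟩
    · rcases hmem _ h1 with h1b | ⟨h1', -⟩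
      · exfalso; have := h1b.trans h2b.symm; simp at this
      · rw [h2b, hTb]
        exact hlt _ h1'
    · rcases hmem _ h1 with h1b | ⟨h1', -⟩
      · -- (1, j) = b, (1, j+1) ∈ cd α: contradiction with hntop
        exfalso
        have hb1 : b.1 = 1 := by rw [← h1b]
        have hb2 : b.2 = j := by rw [← h1b]
        exact hntop hb1 (by rw [hb2]; exact h2)
      · rw [hag _ h1', hag _ h2']
        exact hFC j h1' h2'
  · -- YoungTriple
    intro k i j hij h1 h2 h3
    rcases hmem _ h1 with h1b | ⟨h1', h1ne⟩
    · -- (k, j) = b : T value n, other old => contradiction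
      exfalso
      have h2b : (k + 1, i) ≠ b := by
        intro h
        rw [← h1b] at h
        have := congrArg Prod.fst h
        simp at this
      rcases hmem _ h2 with h | ⟨h2', -⟩
      · exact h2b h
      · rw [h1b, hTb] at h3
        exact absurd h3 (not_le.mpr (hlt _ h2'))
    · rcases hmem _ h2 with h2b | ⟨h2', h2ne⟩
      · -- (k+1, i) = b
        have hk1 : k + 1 = b.1 := by rw [← h2b]
        have hib : i = b.2 := by rw [← h2b]
        have hj : (b.1 - 1, j) ∈ cd α := by
          have : b.1 - 1 = k := by omega
          rw [this]
          exact h1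
        have h4 : (b.1, j) ∈ cd α := hdom j (by omega) hj
        have h4' : (b.1, j) ∈ cd α' := by
          rcases hmem _ h4 with hh | ⟨hh, -⟩
          · exfalso
            have := congrArg Prod.snd hh
            simp at this
            omega
          · exact hh
        refine ⟨by rw [hk1]; exact h4, ?_⟩
        rw [h2b, hTb, hk1]
        exact hlt _ h4'
      · -- both old
        rw [hag _ h1', hag _ h2'] at h3
        obtain ⟨h4, h5⟩ := hYT k i j hij h1' h2' h3
        refine ⟨by rw [hcd]; exact Finset.mem_insert_of_mem h4, ?_⟩
        rw [hag _ h4, hag _ h2']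
        exact h5
  · -- PeakCond
    intro k hk1 hk2
    rw [hsum] at hk2
    rcases Nat.eq_or_lt_of_le hk2 with rfl | hlt'
    · refine ⟨α, hpk, ?_⟩
      rw [Finset.filter_true_of_mem]
      intro q hq
      rcases hmem q hq with rfl | ⟨hq', -⟩
      · rw [hTb]
      · have := hlt q hq'
        omega
    · have heq : (cd α).filter (fun p => T p ≤ k) =
          (cd α').filter (fun p => T' p ≤ k) := by
        ext q
        simp only [Finset.mem_filter]
        constructor
        · rintro ⟨hq, hq2⟩
          rcases hmem q hq with rfl | ⟨hq', -⟩
          · rw [hTb] at hq2; omega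
          · rw [hag q hq'] at hq2
            exact ⟨hq', hq2⟩
        · rintro ⟨hq, hq2⟩
          refine ⟨by rw [hcd]; exact Finset.mem_insert_of_mem hq, ?_⟩
          rw [hag q hq]
          exact hq2
      rw [heq]
      exact hPC k hk1 (by omega)

end Steps

section Steps2

variable {l l' : List ℕ} {U U' : ℕ × ℕ → ℕ} {b : ℕ × ℕ} {n : ℕ}

/-- removing the maximal entry from a SPYT. -/
lemma SPYT_remove (hU : IsSYT l U) (hPC : PeakCond l U) (hsum : l.sum = n) (hn : 1 ≤ n)
    (hb : b ∈ cd l) (hUb : U b = n)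
    (hsum' : l'.sum = n - 1)
    (hcd : cd l' = (cd l).erase b) :
    IsSYT l' (Function.update U b 0) ∧ PeakCond l' (Function.update U b 0) := by
  obtain ⟨hSF, hRI, hCI⟩ := hU
  have hsub : ∀ q ∈ cd l', q ∈ cd l ∧ q ≠ b := by
    intro q hq
    rw [hcd, Finset.mem_erase] at hq
    exact ⟨hq.2, hq.1⟩
  have hag : ∀ q ∈ cd l', Function.update U b 0 q = U q := by
    intro q hq
    exact Function.update_of_ne (hsub q hq).2 _ _
  have hne : ∀ q ∈ cd l', U q ≠ n := by
    intro q hq hqn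
    exact (hsub q hq).2 (hSF.1.injOn (hsub q hq).1 hb (by rw [hqn, hUb]))
  refine ⟨⟨⟨⟨?_, ?_, ?_⟩, ?_⟩, ?_, ?_⟩, ?_⟩
  · intro q hq
    rw [Set.mem_Icc, hsum']
    have hq' : q ∈ cd l' := hq
    have h1 := sf_mem_Icc hSF (hsub q hq').1
    rw [hag q hq']
    have := hne q hq'
    rw [hsum] at h1
    omega
  · intro q hq r hr hqr
    rw [hag q hq, hag r hr] at hqr
    exact hSF.1.injOn (hsub q hq).1 (hsub r hr).1 hqr
  · intro y hy
    rw [Set.mem_Icc, hsum'] at hy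
    obtain ⟨q, hq, hqy⟩ := hSF.1.surjOn
      (Set.mem_Icc.mpr ⟨hy.1, by omega⟩ : y ∈ Set.Icc 1 l.sum)
    have hqb : q ≠ b := by
      intro h
      rw [h, hUb] at hqy
      omega
    have hqβ : q ∈ cd l' := by
      rw [hcd, Finset.mem_erase]
      exact ⟨hqb, hq⟩
    exact ⟨q, hqβ, by rw [hag q hqβ]; exact hqy⟩
  · intro p hp
    by_cases hpb : p = b
    · rw [hpb, Function.update_self]
    · rw [Function.update_of_ne hpb]
      apply hSF.2
      intro hpα
      exact hp (by rw [hcd, Finset.mem_erase]; exact ⟨hpb, hpα⟩)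
  · intro i j h1 h2
    rw [hag _ h1, hag _ h2]
    exact hRI i j (hsub _ h1).1 (hsub _ h2).1
  · intro i j h1 h2
    rw [hag _ h1, hag _ h2]
    exact hCI i j (hsub _ h1).1 (hsub _ h2).1
  · intro k hk1 hk2
    rw [hsum'] at hk2
    have heq : (cd l').filter (fun p => Function.update U b 0 p ≤ k) =
        (cd l).filter (fun p => U p ≤ k) := by
      ext q
      simp only [Finset.mem_filter]
      constructor
      · rintro ⟨hq, hq2⟩
        rw [hag q hq] at hq2
        exact ⟨(hsub q hq).1, hq2⟩
      · rintro ⟨hq, hq2⟩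
        have hqb : q ≠ b := by
          intro h
          rw [h, hUb] at hq2
          omega
        have hqβ : q ∈ cd l' := by rw [hcd, Finset.mem_erase]; exact ⟨hqb, hq⟩
        exact ⟨hqβ, by rw [hag q hqβ]; exact hq2⟩
    rw [heq]
    exact hPC k hk1 (by rw [hsum]; omega)

/-- adding a new maximal entry to a SPYT at an outer corner. -/
lemma SPYT_add (hU' : IsSYT l' U') (hPC : PeakCond l' U')
    (hsum' : l'.sum = n - 1) (hsum : l.sum = n) (hn : 1 ≤ n)
    (hcd : cd l = insert b (cd l')) (hbnot : b ∉ cd l')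
    (hpk : IsPeakComposition n l)
    (hnr : (b.1 + 1, b.2) ∉ cd l)
    (hnc : (b.1, b.2 + 1) ∉ cd l) :
    IsSYT l (Function.update U' b n) ∧ PeakCond l (Function.update U' b n) := by
  obtain ⟨hSF, hRI, hCI⟩ := hU'
  set U := Function.update U' b n with hUdef
  have hUb : U b = n := Function.update_self _ _ _
  have hag : ∀ q ∈ cd l', U q = U' q := fun q hq =>
    Function.update_of_ne (fun h => hbnot (by rw [← h]; exact hq)) _ _
  have hmem : ∀ q ∈ cd l, q = b ∨ (q ∈ cd l' ∧ q ≠ b) := by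
    intro q hq
    rw [hcd, Finset.mem_insert] at hq
    rcases hq with h | h
    · exact Or.inl h
    · exact Or.inr ⟨h, fun hh => hbnot (hh ▸ h)⟩
  have hlt : ∀ q ∈ cd l', U q < n := by
    intro q hq
    rw [hag q hq]
    have := (sf_mem_Icc hSF hq).2
    rw [hsum'] at this
    omega
  refine ⟨⟨⟨⟨?_, ?_, ?_⟩, ?_⟩, ?_, ?_⟩, ?_⟩
  · intro q hq
    rw [Set.mem_Icc, hsum]
    rcases hmem q hq with rfl | ⟨hq', -⟩
    · rw [hUb]; omega
    · have h1 := (sf_mem_Icc hSF hq').1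
      have h2 := hlt q hq'
      rw [hag q hq'] at h2 ⊢
      omega
  · intro q hq r hr hqr
    rcases hmem q hq with rfl | ⟨hq', hqb⟩ <;> rcases hmem r hr with rfl | ⟨hr', hrb⟩
    · rfl
    · rw [hUb] at hqr; exact absurd hqr.symm (Nat.ne_of_lt (hlt r hr'))
    · rw [hUb] at hqr; exact absurd hqr (Nat.ne_of_lt (hlt q hq'))
    · rw [hag q hq', hag r hr'] at hqr
      exact hSF.1.injOn hq' hr' hqr
  · intro y hy
    rw [Set.mem_Icc, hsum] at hy
    rcases Nat.eq_or_lt_of_le hy.2 with rfl | hlt'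
    · exact ⟨b, by rw [hcd]; exact Finset.mem_insert_self _ _, hUb⟩
    · obtain ⟨q, hq, hqy⟩ := hSF.1.surjOn
        (Set.mem_Icc.mpr ⟨hy.1, by rw [hsum']; omega⟩ : y ∈ Set.Icc 1 l'.sum)
      refine ⟨q, by rw [hcd]; exact Finset.mem_insert_of_mem hq, ?_⟩
      rw [hag q hq]; exact hqy
  · intro p hp
    have hpb : p ≠ b := fun h => hp (h ▸ (by rw [hcd]; exact Finset.mem_insert_self _ _))
    rw [hUdef, Function.update_of_ne hpb]
    exact hSF.2 p (fun h => hp (by rw [hcd]; exact Finset.mem_insert_of_mem h))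
  · -- RowsIncrease
    intro i j h1 h2
    rcases hmem _ h2 with h2b | ⟨h2', h2b⟩
    · rcases hmem _ h1 with h1b | ⟨h1', -⟩
      · exfalso; have := h1b.trans h2b.symm; simp at this
      · rw [h2b, hUb]
        exact hlt _ h1'
    · rcases hmem _ h1 with h1b | ⟨h1', -⟩
      · exact absurd (h1b ▸ h2) hnr
      · rw [hag _ h1', hag _ h2']
        exact hRI i j h1' h2'
  · -- ColsIncrease
    intro i j h1 h2
    rcases hmem _ h2 with h2b | ⟨h2', h2b⟩
    · rcases hmem _ h1 with h1b | ⟨h1', -⟩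
      · exfalso; have := h1b.trans h2b.symm; simp at this
      · rw [h2b, hUb]
        exact hlt _ h1'
    · rcases hmem _ h1 with h1b | ⟨h1', -⟩
      · exact absurd (h1b ▸ h2) hnc
      · rw [hag _ h1', hag _ h2']
        exact hCI i j h1' h2'
  · -- PeakCond
    intro k hk1 hk2
    rw [hsum] at hk2
    rcases Nat.eq_or_lt_of_le hk2 with rfl | hlt'
    · refine ⟨l, hpk, ?_⟩
      rw [Finset.filter_true_of_mem]
      intro q hq
      rcases hmem q hq with rfl | ⟨hq', -⟩
      · rw [hUb]
      · have := hlt q hq'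
        omega
    · have heq : (cd l).filter (fun p => U p ≤ k) =
          (cd l').filter (fun p => U' p ≤ k) := by
        ext q
        simp only [Finset.mem_filter]
        constructor
        · rintro ⟨hq, hq2⟩
          rcases hmem q hq with rfl | ⟨hq', -⟩
          · rw [hUb] at hq2; omega
          · rw [hag q hq'] at hq2
            exact ⟨hq', hq2⟩
        · rintro ⟨hq, hq2⟩
          refine ⟨by rw [hcd]; exact Finset.mem_insert_of_mem hq, ?_⟩
          rw [hag q hq]
          exact hq2
      rw [heq]
      exact hPC k hk1 (by rw [hsum']; omega)

end Steps2

/-- The column-sorting map is compatible with adding/removing a maximal box. -/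
lemma colSort_update
    {L L' A A' : List ℕ} {T T' : ℕ × ℕ → ℕ} {b bu : ℕ × ℕ} {n m : ℕ}
    (hA : cd A = insert b (cd A')) (hbA : b ∉ cd A')
    (hL : cd L = insert bu (cd L')) (hbL : bu ∉ cd L')
    (hcol : b.1 = bu.1) (hbu2 : bu.2 = m + 1)
    (hT : T = Function.update T' b n)
    (h4 : ∀ p ∈ cd A', T' p < n)
    (h5 : Set.InjOn T' (cd A' : Set (ℕ × ℕ)))
    (h6 : ((cd A').filter (fun p => p.1 = bu.1)).card = m)
    (h7 : ∀ p ∈ cd L', p.1 = bu.1 → p.2 ≤ m) :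
    colSortTo L A T = Function.update (colSortTo L' A' T') bu n := by
  have hTag : ∀ q ∈ cd A', T q = T' q := by
    intro q hq
    rw [hT]
    exact Function.update_of_ne (fun h => hbA (by rw [← h]; exact hq)) _ _
  have hTb : T b = n := by rw [hT]; exact Function.update_self _ _ _
  have himage : ∀ i, i ≠ bu.1 →
      ((cd A).filter (fun q => q.1 = i)).image T =
      ((cd A').filter (fun q => q.1 = i)).image T' := by
    intro i hi
    have hcs : (cd A).filter (fun q => q.1 = i) = (cd A').filter (fun q => q.1 = i) := by
      rw [hA, Finset.filter_insert, if_neg (by rw [hcol]; exact fun h => hi h.symm)]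
    rw [hcs]
    apply Finset.image_congr
    intro q hq
    exact hTag q (Finset.mem_filter.mp hq).1
  have hcolbu : (cd A).filter (fun q => q.1 = bu.1) =
      insert b ((cd A').filter (fun q => q.1 = bu.1)) := by
    rw [hA, Finset.filter_insert, if_pos hcol]
  have himgbu : ((cd A).filter (fun q => q.1 = bu.1)).image T =
      insert n (((cd A').filter (fun q => q.1 = bu.1)).image T') := by
    rw [hcolbu, Finset.image_insert, hTb]
    congr 1
    apply Finset.image_congr
    intro q hq
    exact hTag q (Finset.mem_filter.mp hq).1
  have hltimg : ∀ x ∈ ((cd A').filter (fun q => q.1 = bu.1)).image T', x < n := by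
    intro x hx
    obtain ⟨q, hq, rfl⟩ := Finset.mem_image.mp hx
    exact h4 q (Finset.mem_filter.mp hq).1
  have hsortbu : (((cd A).filter (fun q => q.1 = bu.1)).image T).sort (· ≤ ·) =
      ((((cd A').filter (fun q => q.1 = bu.1)).image T').sort (· ≤ ·)) ++ [n] := by
    rw [himgbu]
    exact sort_insert_max hltimg
  have hlen : (((((cd A').filter (fun q => q.1 = bu.1)).image T').sort (· ≤ ·))).length = m := by
    rw [Finset.length_sort, Finset.card_image_of_injOn, h6]
    exact h5.mono (by intro q hq; exact (Finset.mem_filter.mp hq).1)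
  funext p
  by_cases hp : p = bu
  · subst hp
    have hpL : p ∈ cd L := by rw [hL]; exact Finset.mem_insert_self _ _
    rw [Function.update_self]
    unfold colSortTo
    rw [if_pos hpL, hsortbu, hbu2]
    have : m + 1 - 1 = m := by omega
    rw [this, List.getD_append_right _ _ _ _ (by rw [hlen]), hlen]
    simp
  · rw [Function.update_of_ne hp]
    by_cases hpL : p ∈ cd L
    · have hpL' : p ∈ cd L' := by
        rw [hL] at hpL
        rcases Finset.mem_insert.mp hpL with h | h
        · exact absurd h hp
        · exact h
      unfold colSortTo
      rw [if_pos hpL, if_pos hpL']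
      by_cases hpi : p.1 = bu.1
      · rw [hpi, hsortbu]
        have hp2 : p.2 ≤ m := h7 p hpL' hpi
        have hp2' : 1 ≤ p.2 := (mem_cd'.mp hpL').2.1
        rw [List.getD_append _ _ _ _ (by rw [hlen]; omega)]
      · rw [himage p.1 hpi]
    · have hpL' : p ∉ cd L' := fun h => hpL (by rw [hL]; exact Finset.mem_insert_of_mem h)
      unfold colSortTo
      rw [if_neg hpL, if_neg hpL']

lemma cd_nil : cd ([] : List ℕ) = ∅ := by
  ext p
  simp only [mem_cd', Finset.notMem_empty, iff_false, List.length_nil]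
  omega

lemma comp_zero {l : List ℕ} (h : IsComposition 0 l) : l = [] := by
  obtain ⟨hpos, hsum⟩ := h
  cases l with
  | nil => rfl
  | cons x xs =>
      exfalso
      have hx := hpos x (List.mem_cons_self)
      have : x + xs.sum = 0 := hsum
      omega

lemma peak_comp_nil : IsPeakComposition 0 ([] : List ℕ) :=
  ⟨⟨fun a h => absurd h List.not_mem_nil, rfl⟩, fun i h => by simp at h⟩

lemma IsSYT_nil {U : ℕ × ℕ → ℕ} (h0 : ∀ p, U p = 0) :
    IsSYT [] U ∧ PeakCond [] U := by
  refine ⟨⟨⟨⟨?_, ?_, ?_⟩, fun p _ => h0 p⟩, ?_, ?_⟩, ?_⟩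
  · intro q hq; simp only [cd_nil, Finset.coe_empty] at hq; exact absurd hq (Set.notMem_empty q)
  · intro q hq _ _ _; simp only [cd_nil, Finset.coe_empty] at hq; exact absurd hq (Set.notMem_empty q)
  · intro y hy; exfalso; rw [Set.mem_Icc] at hy; simp at hy; omega
  · intro i j h1 _; exfalso; rw [cd_nil] at h1; simp at h1
  · intro i j h1 _; exfalso; rw [cd_nil] at h1; simp at h1
  · intro k hk1 hk2; exfalso; simp at hk2; omega

/-- For a peak partition `l`, the image under the column-sorting map of
the union of the sets `SPYCT(α)`, over all peak compositions `α` whose decreasing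
rearrangement is `l`, equals `SPYT(l)`. -/
theorem sort_image_eq_SPYT (n : ℕ) (l : List ℕ) (hcomp : IsComposition n l)
    (hsorted : l.Pairwise (· ≥ ·)) (hpeak : IsPeakComposition n l) :
    {U : ℕ × ℕ → ℕ | ∃ α : List ℕ, IsPeakComposition n α ∧ α.Perm l ∧
        ∃ T ∈ SPYCTset α, U = colSortTo l α T} =
      SPYTset l := by
  induction n using Nat.strong_induction_on generalizing l with
  | _ n IH =>
  rcases Nat.eq_zero_or_pos n with rfl | hn
  · -- base case n = 0
    have hlnil : l = [] := comp_zero hcomp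
    subst hlnil
    ext U
    simp only [Set.mem_setOf_eq, SPYTset, SPYCTset]
    constructor
    · rintro ⟨α, hαpk, hαperm, T, hT, rfl⟩
      have hU0 : ∀ p, colSortTo [] α T p = 0 := by
        intro p
        unfold colSortTo
        rw [if_neg (by rw [cd_nil]; exact Finset.notMem_empty p)]
      exact IsSYT_nil hU0
    · intro hU
      obtain ⟨⟨hSF, hRI, hCI⟩, hPC⟩ := hU
      refine ⟨[], peak_comp_nil, List.Perm.refl _, U, ?_, ?_⟩
      · exact ⟨⟨hSF, hRI, (fun j h1 _ => absurd h1 (by rw [cd_nil]; simp)),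
          (fun k i j _ h1 _ _ => absurd h1 (by rw [cd_nil]; simp))⟩, hPC⟩
      · funext p
        unfold colSortTo
        rw [if_neg (by rw [cd_nil]; exact Finset.notMem_empty p)]
        exact hSF.2 p (by rw [cd_nil]; simp)
  · -- inductive step, n ≥ 1
    have hlpos := hcomp.1
    have hlsum := hcomp.2
    ext U
    simp only [Set.mem_setOf_eq]
    constructor
    · -- LHS ⊆ SPYT
      rintro ⟨α, hαpk, hαperm, T, hTmem, rfl⟩
      have hTT := hTmem
      obtain ⟨⟨hSF, hRI, hFC, hYT⟩, hPC⟩ := hTT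
      have hαsum : α.sum = n := hαpk.1.2
      have hαpos := hαpk.1.1
      obtain ⟨b, hbmem, hbval⟩ : ∃ b ∈ cd α, T b = n := by
        obtain ⟨q, hq, hqv⟩ := hSF.1.surjOn
          (show (n : ℕ) ∈ Set.Icc 1 α.sum by
            rw [hαsum]; exact Set.mem_Icc.mpr ⟨hn, le_rfl⟩)
        exact ⟨q, hq, hqv⟩
      have hi₀ : 1 ≤ b.1 := (mem_cd'.mp hbmem).1
      obtain ⟨β, hβpk, hβcd⟩ : ∃ β, IsPeakComposition (n - 1) β ∧
          (cd α).filter (fun p => T p ≤ n - 1) = cd β := by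
        rcases Nat.eq_or_lt_of_le hn with h1 | h1
        · refine ⟨[], by rw [← h1]; exact peak_comp_nil, ?_⟩
          rw [cd_nil, Finset.filter_false_of_mem]
          intro q hq
          have := (sf_mem_Icc hSF hq).1
          omega
        · exact hPC (n - 1) (by omega) (by rw [hαsum]; omega)
      have hβcd2 : cd β = (cd α).erase b := by
        rw [← hβcd]
        ext q
        simp only [Finset.mem_filter, Finset.mem_erase]
        constructor
        · rintro ⟨hq, hq2⟩
          refine ⟨fun h => ?_, hq⟩
          rw [h, hbval] at hq2; omega
        · rintro ⟨hqb, hq⟩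
          refine ⟨hq, ?_⟩
          have h1 := (sf_mem_Icc hSF hq).2
          rw [hαsum] at h1
          have h2 : T q ≠ n := fun hh =>
            hqb (hSF.1.injOn hq hbmem (by rw [hh, hbval]))
          omega
      have hinsert : cd α = insert b (cd β) := by
        rw [hβcd2, Finset.insert_erase hbmem]
      have hbβ : b ∉ cd β := by rw [hβcd2]; exact Finset.notMem_erase _ _
      -- the restricted tableau
      have hT' : IsSPYCT β (Function.update T b 0) :=
        SPYCT_remove ⟨⟨hSF, hRI, hFC, hYT⟩, hPC⟩ hαsum hn hbmem hbval hβpk.1.2 hβcd2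
      set T' := Function.update T b 0 with hT'def
      -- the sorted shape
      set l'' := Multiset.sort (↑β : Multiset ℕ) (· ≥ ·) with hl''def
      have hl''permβ : l''.Perm β := by
        rw [← Multiset.coe_eq_coe, hl''def, Multiset.sort_eq]
      have hl''sorted : l''.Pairwise (· ≥ ·) := Multiset.pairwise_sort _ _
      have hl''pos : ∀ a ∈ l'', 0 < a := fun a ha => hβpk.1.1 a (hl''permβ.subset ha)
      have hl''sum : l''.sum = n - 1 := hl''permβ.sum_eq.trans hβpk.1.2
      have hl''peak : IsPeakComposition (n - 1) l'' := by
        refine ⟨⟨hl''pos, hl''sum⟩, ?_⟩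
        apply peak_of_sorted hl''sorted hl''pos
        rw [hl''permβ.countP_eq]
        exact peak_countP_le_one hβpk
      -- apply the induction hypothesis
      set U'' := colSortTo l'' β T' with hU''def
      have hU''mem : U'' ∈ SPYTset l'' := by
        have hiff := IH (n - 1) (by omega) l'' hl''peak.1 hl''sorted hl''peak
        rw [← hiff]
        exact ⟨β, hβpk, hl''permβ.symm, T', hT', rfl⟩
      obtain ⟨hU''SYT, hU''PC⟩ := hU''mem
      -- column counts
      have hcc : ∀ i, 1 ≤ i → c l i = c l'' i + (if i = b.1 then 1 else 0) := by
        intro i hi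
        have h1 : c l i = c α i := (c_perm hαperm i).symm
        have h2 : c l'' i = c β i := c_perm hl''permβ i
        rw [h1, h2, ← card_col (α := α) hi, ← card_col (α := β) hi, hinsert,
          Finset.filter_insert]
        by_cases hib : b.1 = i
        · rw [if_pos hib, if_pos hib.symm,
            Finset.card_insert_of_notMem (fun h => hbβ (Finset.mem_filter.mp h).1)]
        · rw [if_neg hib, if_neg (fun h => hib h.symm)]
          omega
      set m := c l'' b.1 with hmdef
      set bu : ℕ × ℕ := (b.1, m + 1) with hbudef
      have hbuL : bu ∉ cd l'' := by
        rw [hbudef, mem_cd_sorted hl''sorted hl''pos hi₀ (by omega)]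
        omega
      have hLins : cd l = insert bu (cd l'') := by
        ext p
        obtain ⟨x, y⟩ := p
        constructor
        · intro h
          have hx : 1 ≤ x := (mem_cd.mp h).1
          have hy : 1 ≤ y := (mem_cd.mp h).2.1
          rw [mem_cd_sorted hsorted hlpos hx hy, hcc x hx] at h
          rw [Finset.mem_insert, mem_cd_sorted hl''sorted hl''pos hx hy]
          by_cases hxb : x = b.1
          · subst hxb
            rw [if_pos rfl] at h
            rcases Nat.eq_or_lt_of_le h with h1 | h1
            · refine Or.inl ?_
              rw [hbudef]
              have hy1 : y = m + 1 := by omega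
              rw [hy1]
            · exact Or.inr (by omega)
          · rw [if_neg hxb] at h
            exact Or.inr (by omega)
        · intro h
          rcases Finset.mem_insert.mp h with h | h
          · rw [hbudef] at h
            obtain ⟨rfl, rfl⟩ : x = b.1 ∧ y = m + 1 := by
              refine ⟨congrArg Prod.fst h, congrArg Prod.snd h⟩
            rw [mem_cd_sorted hsorted hlpos hi₀ (by omega), hcc _ hi₀, if_pos rfl]
            try omega
          · have hx : 1 ≤ x := (mem_cd.mp h).1
            have hy : 1 ≤ y := (mem_cd.mp h).2.1
            rw [mem_cd_sorted hl''sorted hl''pos hx hy] at h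
            rw [mem_cd_sorted hsorted hlpos hx hy, hcc x hx]
            by_cases hxb : x = b.1
            · subst hxb
              rw [if_pos rfl]
              omega
            · rw [if_neg hxb]
              omega
      have hTT' : T = Function.update T' b n := by
        funext q
        rcases eq_or_ne q b with rfl | hq
        · rw [Function.update_self, hbval]
        · rw [Function.update_of_ne hq, hT'def, Function.update_of_ne hq]
      have hT'SF : IsStandardFilling β T' := hT'.1.1
      have h4 : ∀ p ∈ cd β, T' p < n := by
        intro p hp
        have := (sf_mem_Icc hT'SF hp).2
        rw [hβpk.1.2] at this
        omega
      have h6 : ((cd β).filter (fun p => p.1 = bu.1)).card = m := by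
        have : bu.1 = b.1 := rfl
        rw [this, card_col hi₀, hmdef, c_perm hl''permβ]
      have h7 : ∀ p ∈ cd l'', p.1 = bu.1 → p.2 ≤ m := by
        intro p hp hp1
        obtain ⟨x, y⟩ := p
        have hx : 1 ≤ x := (mem_cd.mp hp).1
        have hy : 1 ≤ y := (mem_cd.mp hp).2.1
        rw [mem_cd_sorted hl''sorted hl''pos hx hy] at hp
        simp only at hp1
        rw [hp1] at hp
        exact hp
      have heq : colSortTo l α T = Function.update U'' bu n :=
        colSort_update hinsert hbβ hLins hbuL rfl rfl hTT' h4 hT'SF.1.injOn h6 h7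
      have hnr : (bu.1 + 1, bu.2) ∉ cd l := by
        intro h
        have hx : 1 ≤ bu.1 + 1 := by omega
        have hy : 1 ≤ bu.2 := by rw [hbudef]; omega
        rw [mem_cd_sorted hsorted hlpos hx hy, hcc _ hx] at h
        have h1 : c l'' (b.1 + 1) ≤ c l'' b.1 := c_anti (by omega)
        have h2 : bu.2 = m + 1 := rfl
        have h3 : bu.1 + 1 = b.1 + 1 := rfl
        rw [h2, h3, if_neg (by omega)] at h
        omega
      have hnc : (bu.1, bu.2 + 1) ∉ cd l := by
        intro h
        have hy : 1 ≤ bu.2 + 1 := by omega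
        rw [mem_cd_sorted hsorted hlpos hi₀ hy, hcc _ hi₀, if_pos rfl] at h
        have h2 : bu.2 = m + 1 := rfl
        omega
      have hfinal := SPYT_add hU''SYT hU''PC hl''sum hlsum hn hLins hbuL hpeak hnr hnc
      rw [heq]
      exact ⟨hfinal.1, hfinal.2⟩
    · -- SPYT ⊆ LHS
      intro hU
      obtain ⟨hUSYT, hUPC⟩ := hU
      have hUSYT' := hUSYT
      obtain ⟨hSF, hRI, hCI⟩ := hUSYT'
      obtain ⟨bu, hbumem, hbuval⟩ : ∃ bu ∈ cd l, U bu = n := by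
        obtain ⟨q, hq, hqv⟩ := hSF.1.surjOn
          (show (n : ℕ) ∈ Set.Icc 1 l.sum by
            rw [hlsum]; exact Set.mem_Icc.mpr ⟨hn, le_rfl⟩)
        exact ⟨q, hq, hqv⟩
      obtain ⟨i₀, j₀⟩ := bu
      obtain ⟨hi₀, hj₀, hj₀len, hi₀part⟩ := mem_cd.mp hbumem
      have hrowend : part l j₀ = i₀ := by
        by_contra hne
        have h1 : (i₀ + 1, j₀) ∈ cd l := mem_cd.mpr ⟨by omega, hj₀, hj₀len, by omega⟩
        have h2 := hRI i₀ j₀ hbumem h1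
        have h3 := (sf_mem_Icc hSF h1).2
        rw [hbuval] at h2
        rw [hlsum] at h3
        omega
      have hcoltop : (i₀, j₀ + 1) ∉ cd l := by
        intro h1
        have h2 := hCI i₀ j₀ hbumem h1
        have h3 := (sf_mem_Icc hSF h1).2
        rw [hbuval] at h2
        rw [hlsum] at h3
        omega
      have hjc : j₀ = c l i₀ := by
        have h1 : j₀ ≤ c l i₀ := (mem_cd_sorted hsorted hlpos hi₀ hj₀).mp hbumem
        have h2 : ¬ (j₀ + 1 ≤ c l i₀) := fun hh =>
          hcoltop ((mem_cd_sorted hsorted hlpos hi₀ (by omega)).mpr hh)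
        omega
      -- construct the reduced shape l''
      obtain ⟨l'', hcdl'', hl''pos, hl''sorted, hl''sum, hl''ms, hl''mem1, hl''gt1⟩ :
          ∃ l'' : List ℕ, cd l'' = (cd l).erase (i₀, j₀) ∧ (∀ a ∈ l'', 0 < a) ∧
            l''.Pairwise (· ≥ ·) ∧ l''.sum = n - 1 ∧
            (∃ M : Multiset ℕ, (↑l : Multiset ℕ) = i₀ ::ₘ M ∧
              (i₀ = 1 → (↑l'' : Multiset ℕ) = M) ∧
              (2 ≤ i₀ → (↑l'' : Multiset ℕ) = (i₀ - 1) ::ₘ M)) ∧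
            (2 ≤ i₀ → (i₀ - 1) ∈ l'') ∧ (i₀ = 1 → ∀ a ∈ l'', 1 < a) := by
        rcases Nat.lt_or_ge i₀ 2 with hi₀2 | hi₀2
        · -- i₀ = 1
          have hi₀1 : i₀ = 1 := by omega
          subst hi₀1
          have hj₀last : j₀ = l.length := by
            by_contra hne
            have hpk := hpeak.2 (j₀ - 1) (by omega)
            have hpart : l.getD (j₀ - 1) 0 = 1 := hrowend
            omega
          have hlne : l ≠ [] := by
            intro h
            rw [h] at hj₀len
            simp at hj₀len
            omega
          have hlast1 : l.getLast hlne = 1 := by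
            rw [List.getLast_eq_getElem]
            have h1 : l[l.length - 1]'(by omega) = part l l.length :=
              (List.getD_eq_getElem _ _ (by omega)).symm
            rw [h1, ← hj₀last, hrowend]
          have hsplit : l = l.dropLast ++ [1] := by
            conv_lhs => rw [← List.dropLast_append_getLast hlne]
            rw [hlast1]
          have hlen'' : l.dropLast.length = l.length - 1 := by
            rw [List.length_dropLast]
          have hpartd : ∀ y, 1 ≤ y → y ≤ l.length - 1 → part l.dropLast y = part l y := by
            intro y hy1 hy2
            conv_rhs => rw [hsplit]
            rw [part_append_lt hy1 (by omega)]
          have hsum'' : l.dropLast.sum + 1 = l.sum := by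
            conv_rhs => rw [hsplit]
            rw [List.sum_append]
            simp
          have hcoe : (↑l : Multiset ℕ) = 1 ::ₘ (↑l.dropLast : Multiset ℕ) := by
            conv_lhs => rw [hsplit]
            exact multiset_append_singleton _ _
          refine ⟨l.dropLast, ?_, ?_, ?_, by omega, ⟨↑l.dropLast, hcoe, fun _ => rfl,
            fun h => by omega⟩, fun h => by omega, ?_⟩
          · ext p
            obtain ⟨x, y⟩ := p
            simp only [Finset.mem_erase]
            constructor
            · intro h
              obtain ⟨hx, hy, hylen, hxp⟩ := mem_cd.mp h
              rw [hlen''] at hylen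
              refine ⟨?_, mem_cd.mpr ⟨hx, hy, by omega, by rw [← hpartd y hy hylen]; exact hxp⟩⟩
              intro hh
              have := congrArg Prod.snd hh
              simp at this
              omega
            · rintro ⟨hne2, h⟩
              obtain ⟨hx, hy, hylen, hxp⟩ := mem_cd.mp h
              rcases Nat.lt_or_ge y l.length with hcase | hcase
              · exact mem_cd.mpr ⟨hx, hy, by omega, by rw [hpartd y hy (by omega)]; exact hxp⟩
              · exfalso
                have hyl : y = l.length := by omega
                have : x = 1 := by
                  rw [hyl, ← hj₀last, hrowend] at hxp
                  omega
                exact hne2 (by rw [this, hyl, ← hj₀last])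
          · intro a ha
            exact hlpos a (by rw [hsplit]; exact List.mem_append_left _ ha)
          · exact hsorted.sublist (List.dropLast_sublist l)
          · intro _ a ha
            by_contra hle
            have ha1 : a = 1 := by
              have := hlpos a (by rw [hsplit]; exact List.mem_append_left _ ha)
              omega
            have h1 : 0 < l.dropLast.countP (fun x => decide (x = 1)) :=
              List.countP_pos_iff.mpr ⟨a, ha, by simp [ha1]⟩
            have h2 : l.countP (fun x => decide (x = 1)) =
                l.dropLast.countP (fun x => decide (x = 1)) + 1 := by
              conv_lhs => rw [hsplit]
              rw [List.countP_append]
              simp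
            have h3 := peak_countP_le_one hpeak
            omega
        · -- i₀ ≥ 2
          have hnext : j₀ + 1 ≤ l.length → part l (j₀ + 1) ≤ i₀ - 1 := by
            intro hlen1
            by_contra hh
            exact hcoltop (mem_cd.mpr ⟨hi₀, by omega, hlen1, by omega⟩)
          obtain ⟨M, hM1, hM2⟩ := multiset_set (l := l) (v := i₀ - 1)
            (show j₀ - 1 < l.length by omega)
          have hM1' : (↑l : Multiset ℕ) = i₀ ::ₘ M := by
            rw [show l.getD (j₀ - 1) 0 = i₀ from hrowend] at hM1
            exact hM1
          have hlen'' : (l.set (j₀ - 1) (i₀ - 1)).length = l.length := List.length_set ..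
          have hgetl : l[j₀ - 1]'(by omega) = i₀ := by
            rw [← List.getD_eq_getElem _ 0 (by omega : j₀ - 1 < l.length)]
            exact hrowend
          have hps := List.pairwise_iff_getElem.mp hsorted
          have hbase : ∀ (hkk : j₀ < l.length), l[j₀] ≤ i₀ - 1 := by
            intro hkk
            have h1 : part l (j₀ + 1) = l[j₀] := by
              have : j₀ + 1 - 1 = j₀ := by omega
              rw [show part l (j₀ + 1) = l.getD (j₀ + 1 - 1) 0 from rfl, this,
                List.getD_eq_getElem _ _ hkk]
            rw [← h1]
            exact hnext (by omega)
          have hsmall : ∀ k (hk : k < l.length), j₀ ≤ k → l[k] ≤ i₀ - 1 := by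
            intro k hk hkj
            rcases Nat.eq_or_lt_of_le hkj with rfl | hlt'
            · exact hbase hk
            · have h1 := hps j₀ k (by omega) hk (by omega)
              have h2 := hbase (by omega)
              omega
          refine ⟨l.set (j₀ - 1) (i₀ - 1), ?_, ?_, ?_, ?_,
            ⟨M, hM1', fun h => by omega, fun _ => hM2⟩, ?_, fun h => by omega⟩
          · ext p
            obtain ⟨x, y⟩ := p
            simp only [Finset.mem_erase]
            constructor
            · intro h
              obtain ⟨hx, hy, hylen, hxp⟩ := mem_cd.mp h
              rw [hlen''] at hylen
              by_cases hyj : y = j₀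
              · subst hyj
                rw [part_set_eq hj₀ hj₀len] at hxp
                refine ⟨?_, mem_cd.mpr ⟨hx, hy, hylen, by omega⟩⟩
                intro hh
                have := congrArg Prod.fst hh
                simp at this
                omega
              · rw [part_set_ne hj₀ hy hyj] at hxp
                refine ⟨?_, mem_cd.mpr ⟨hx, hy, hylen, hxp⟩⟩
                intro hh
                have := congrArg Prod.snd hh
                simp at this
                omega
            · rintro ⟨hne2, h⟩
              obtain ⟨hx, hy, hylen, hxp⟩ := mem_cd.mp h
              refine mem_cd.mpr ⟨hx, hy, by omega, ?_⟩
              by_cases hyj : y = j₀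
              · subst hyj
                rw [part_set_eq hj₀ hj₀len]
                rw [hrowend] at hxp
                have hxne : x ≠ i₀ := by
                  intro hh
                  exact hne2 (by rw [hh])
                omega
              · rw [part_set_ne hj₀ hy hyj]
                exact hxp
          · intro a ha
            have h1 : a ∈ (↑(l.set (j₀ - 1) (i₀ - 1)) : Multiset ℕ) := Multiset.mem_coe.mpr ha
            rw [hM2, Multiset.mem_cons] at h1
            rcases h1 with rfl | h1
            · omega
            · have : a ∈ (↑l : Multiset ℕ) := by
                rw [hM1']
                exact Multiset.mem_cons_of_mem h1
              exact hlpos a (Multiset.mem_coe.mp this)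
          · apply List.pairwise_iff_getElem.mpr
            intro u v hu hv huv
            rw [hlen''] at hu hv
            have hgu := List.getElem_set (l := l) (j := v) (a := i₀ - 1) (i := j₀ - 1)
              (by rw [hlen'']; exact hv)
            have hgu2 := List.getElem_set (l := l) (j := u) (a := i₀ - 1) (i := j₀ - 1)
              (by rw [hlen'']; exact hu)
            by_cases hvj : v = j₀ - 1
            · subst hvj
              rw [hgu, hgu2, if_pos rfl, if_neg (by omega)]
              have := hps u (j₀ - 1) hu (by omega) (by omega)
              rw [hgetl] at this
              simp only [ge_iff_le]
              omega
            · by_cases huj : u = j₀ - 1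
              · subst huj
                rw [hgu, hgu2, if_pos rfl, if_neg (fun hh => hvj hh.symm)]
                have := hsmall v hv (by omega)
                simp only [ge_iff_le]
                omega
              · rw [hgu, hgu2, if_neg (fun hh => huj hh.symm), if_neg (fun hh => hvj hh.symm)]
                exact hps u v hu hv huv
          · have e1 := congrArg Multiset.sum hM1'
            have e2 := congrArg Multiset.sum hM2
            rw [Multiset.sum_coe, Multiset.sum_cons] at e1 e2
            omega
          · intro _
            have : (i₀ - 1) ∈ (↑(l.set (j₀ - 1) (i₀ - 1)) : Multiset ℕ) := by
              rw [hM2]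
              exact Multiset.mem_cons_self _ _
            exact Multiset.mem_coe.mp this
      -- β from the peak condition matches l''
      obtain ⟨β, hβpk, hβcd⟩ : ∃ β, IsPeakComposition (n - 1) β ∧
          (cd l).filter (fun p => U p ≤ n - 1) = cd β := by
        rcases Nat.eq_or_lt_of_le hn with h1 | h1
        · refine ⟨[], by rw [← h1]; exact peak_comp_nil, ?_⟩
          rw [cd_nil, Finset.filter_false_of_mem]
          intro q hq
          have := (sf_mem_Icc hSF hq).1
          omega
        · exact hUPC (n - 1) (by omega) (by rw [hlsum]; omega)
      have hfe : (cd l).filter (fun p => U p ≤ n - 1) = (cd l).erase (i₀, j₀) := by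
        ext q
        simp only [Finset.mem_filter, Finset.mem_erase]
        constructor
        · rintro ⟨hq, hq2⟩
          refine ⟨fun h => ?_, hq⟩
          rw [h, hbuval] at hq2; omega
        · rintro ⟨hqb, hq⟩
          refine ⟨hq, ?_⟩
          have h1 := (sf_mem_Icc hSF hq).2
          rw [hlsum] at h1
          have h2 : U q ≠ n := fun hh =>
            hqb (hSF.1.injOn hq hbumem (by rw [hh, hbuval]))
          omega
      have hβl'' : β = l'' := cd_inj hβpk.1.1 hl''pos (by rw [← hβcd, hfe, hcdl''])
      have hl''peak : IsPeakComposition (n - 1) l'' := hβl'' ▸ hβpk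
      -- the restricted tableau
      have hrem := SPYT_remove hUSYT hUPC hlsum hn hbumem hbuval hl''sum hcdl''
      set U'' := Function.update U (i₀, j₀) 0 with hU''def
      have hU''mem : U'' ∈ SPYTset l'' := ⟨hrem.1, hrem.2⟩
      have hiff := IH (n - 1) (by omega) l'' hl''peak.1 hl''sorted hl''peak
      rw [← hiff] at hU''mem
      obtain ⟨α', hα'pk, hα'perm, T', hT'mem, hU''eq⟩ := hU''mem
      have hα'sum : α'.sum = n - 1 := hα'pk.1.2
      have hα'pos := hα'pk.1.1
      have hT'SF : IsStandardFilling α' T' := hT'mem.1.1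
      -- construct the new shape α with box b
      obtain ⟨α, b, hb1, hcdα, hbα', hαpk, hαperm, hdom, hnr, hntop⟩ :
          ∃ (α : List ℕ) (b : ℕ × ℕ), b.1 = i₀ ∧
            cd α = insert b (cd α') ∧ b ∉ cd α' ∧ IsPeakComposition n α ∧ α.Perm l ∧
            (∀ j, b.2 < j → (b.1 - 1, j) ∈ cd α → (b.1, j) ∈ cd α) ∧
            (b.1 + 1, b.2) ∉ cd α ∧ (b.1 = 1 → (1, b.2 + 1) ∉ cd α) := by
        obtain ⟨M, hMl, hM1, hM2⟩ := hl''ms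
        have hα'coe : (↑α' : Multiset ℕ) = (↑l'' : Multiset ℕ) := Multiset.coe_eq_coe.mpr hα'perm
        rcases Nat.lt_or_ge i₀ 2 with hi₀2 | hi₀2
        · -- i₀ = 1 : add a new row of length 1 on top
          have hi₀1 : i₀ = 1 := by omega
          subst hi₀1
          refine ⟨α' ++ [1], (1, α'.length + 1), rfl, ?_, ?_, ?_, ?_, ?_, ?_, ?_⟩
          · -- cd (α' ++ [1]) = insert (1, len'+1) (cd α')
            ext p
            obtain ⟨x, y⟩ := p
            simp only [Finset.mem_insert]
            constructor
            · intro h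
              obtain ⟨hx, hy, hylen, hxp⟩ := mem_cd.mp h
              rw [List.length_append, List.length_singleton] at hylen
              rcases Nat.lt_or_ge y (α'.length + 1) with hcase | hcase
              · refine Or.inr (mem_cd.mpr ⟨hx, hy, by omega, ?_⟩)
                rw [part_append_lt hy (by omega)] at hxp
                exact hxp
              · have hyl : y = α'.length + 1 := by omega
                subst hyl
                rw [part_append_last] at hxp
                have : x = 1 := by omega
                exact Or.inl (by rw [this])
            · intro h
              rcases h with h | h
              · obtain ⟨rfl, rfl⟩ : x = 1 ∧ y = α'.length + 1 :=
                  ⟨congrArg Prod.fst h, congrArg Prod.snd h⟩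
                refine mem_cd.mpr ⟨le_rfl, by omega, ?_, ?_⟩
                · rw [List.length_append, List.length_singleton]
                · rw [part_append_last]
              · obtain ⟨hx, hy, hylen, hxp⟩ := mem_cd.mp h
                refine mem_cd.mpr ⟨hx, hy, ?_, ?_⟩
                · rw [List.length_append, List.length_singleton]; omega
                · rw [part_append_lt hy hylen]; exact hxp
          · -- not in cd α'
            intro h
            have := (mem_cd.mp h).2.2.1
            omega
          · -- peak composition
            have hperm2 : (α' ++ [1]).Perm l := by
              rw [← Multiset.coe_eq_coe, multiset_append_singleton, hα'coe, hM1 rfl, hMl]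
            refine ⟨⟨fun a ha => hlpos a (hperm2.subset ha), hperm2.sum_eq.trans hlsum⟩, ?_⟩
            intro i hi
            rw [List.length_append, List.length_singleton] at hi
            have hi' : i < α'.length := by omega
            rw [List.getD_append _ _ _ _ hi']
            have hmem : α'.getD i 0 ∈ α' := by
              rw [List.getD_eq_getElem _ _ hi']
              exact List.getElem_mem _
            exact hl''gt1 rfl _ (hα'perm.subset hmem)
          · -- perm
            rw [← Multiset.coe_eq_coe, multiset_append_singleton, hα'coe, hM1 rfl, hMl]
          · -- hdom vacuous since b.1 - 1 = 0
            intro j hj hmem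
            exact absurd (mem_cd.mp hmem).1 (by omega)
          · -- (2, len'+1) ∉ cd α
            intro h
            obtain ⟨hx, hy, hylen, hxp⟩ := mem_cd.mp h
            rw [part_append_last] at hxp
            omega
          · -- (1, len'+2) ∉ cd α
            intro _ h
            obtain ⟨hx, hy, hylen, hxp⟩ := mem_cd.mp h
            rw [List.length_append, List.length_singleton] at hylen
            omega
        · -- i₀ ≥ 2 : lengthen the topmost row of size i₀ - 1
          have hα'mem : (i₀ - 1) ∈ α' := hα'perm.mem_iff.mpr (hl''mem1 hi₀2)
          obtain ⟨m0, hm0len, hm0⟩ := List.mem_iff_getElem.mp hα'mem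
          set S := (Finset.Icc 1 α'.length).filter (fun j => part α' j = i₀ - 1) with hSdef
          have hSne : S.Nonempty := by
            refine ⟨m0 + 1, Finset.mem_filter.mpr ⟨Finset.mem_Icc.mpr ⟨by omega, by omega⟩, ?_⟩⟩
            show part α' (m0 + 1) = i₀ - 1
            rw [show part α' (m0 + 1) = α'.getD (m0 + 1 - 1) 0 from rfl,
              show m0 + 1 - 1 = m0 by omega, List.getD_eq_getElem _ _ hm0len]
            exact hm0
          set r := S.max' hSne with hrdef
          have hrS := Finset.mem_filter.mp (S.max'_mem hSne)
          obtain ⟨hr1, hrlen⟩ := Finset.mem_Icc.mp hrS.1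
          have hrpart : part α' r = i₀ - 1 := hrS.2
          have htop : ∀ j, r < j → j ≤ α'.length → part α' j ≠ i₀ - 1 := by
            intro j h1 h2 hq
            have := S.le_max' j (Finset.mem_filter.mpr ⟨Finset.mem_Icc.mpr ⟨by omega, h2⟩, hq⟩)
            rw [← hrdef] at this
            omega
          have hlenα : (α'.set (r - 1) i₀).length = α'.length := List.length_set ..
          have hpα_eq : part (α'.set (r - 1) i₀) r = i₀ := part_set_eq hr1 hrlen
          have hpα_ne : ∀ y, 1 ≤ y → y ≠ r → part (α'.set (r - 1) i₀) y = part α' y :=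
            fun y hy hyr => part_set_ne hr1 hy hyr
          obtain ⟨N, hN1, hN2⟩ := multiset_set (l := α') (v := i₀)
            (show r - 1 < α'.length by omega)
          have hN1' : (↑α' : Multiset ℕ) = (i₀ - 1) ::ₘ N := by
            rw [show α'.getD (r - 1) 0 = i₀ - 1 from hrpart] at hN1
            exact hN1
          have hNM : N = M := by
            have h1 : ((i₀ - 1) ::ₘ N : Multiset ℕ) = (i₀ - 1) ::ₘ M := by
              rw [← hN1', hα'coe, hM2 hi₀2]
            exact (Multiset.cons_inj_right _).mp h1
          have hαperm : (α'.set (r - 1) i₀).Perm l := by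
            rw [← Multiset.coe_eq_coe, hN2, hNM, hMl]
          refine ⟨α'.set (r - 1) i₀, (i₀, r), rfl, ?_, ?_, ?_, hαperm, ?_, ?_, ?_⟩
          · -- cd equality
            ext p
            obtain ⟨x, y⟩ := p
            simp only [Finset.mem_insert]
            constructor
            · intro h
              obtain ⟨hx, hy, hylen, hxp⟩ := mem_cd.mp h
              rw [hlenα] at hylen
              by_cases hyr : y = r
              · subst hyr
                rw [hpα_eq] at hxp
                rcases Nat.eq_or_lt_of_le hxp with h1 | h1
                · exact Or.inl (by rw [h1])
                · refine Or.inr (mem_cd.mpr ⟨hx, hy, hylen, ?_⟩)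
                  rw [hrpart]
                  omega
              · rw [hpα_ne y hy hyr] at hxp
                exact Or.inr (mem_cd.mpr ⟨hx, hy, hylen, hxp⟩)
            · intro h
              rcases h with h | h
              · obtain ⟨rfl, rfl⟩ : x = i₀ ∧ y = r :=
                  ⟨congrArg Prod.fst h, congrArg Prod.snd h⟩
                exact mem_cd.mpr ⟨hi₀, hr1, by rw [hlenα]; exact hrlen, by rw [hpα_eq]⟩
              · obtain ⟨hx, hy, hylen, hxp⟩ := mem_cd.mp h
                refine mem_cd.mpr ⟨hx, hy, by rw [hlenα]; omega, ?_⟩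
                by_cases hyr : y = r
                · subst hyr
                  rw [hpα_eq]
                  rw [hrpart] at hxp
                  omega
                · rw [hpα_ne y hy hyr]
                  exact hxp
          · -- (i₀, r) ∉ cd α'
            intro h
            have := (mem_cd.mp h).2.2.2
            rw [hrpart] at this
            omega
          · -- peak composition
            refine ⟨⟨fun a ha => hlpos a (hαperm.subset ha), hαperm.sum_eq.trans hlsum⟩, ?_⟩
            intro i hi
            rw [hlenα] at hi
            by_cases hir : i = r - 1
            · subst hir
              rw [getD_set_eq (by omega)]
              omega
            · rw [getD_set_ne (fun hh => hir hh.symm)]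
              exact hα'pk.2 i hi
          · -- hdom
            intro j hj hmem
            obtain ⟨hx, hy, hylen, hxp⟩ := mem_cd.mp hmem
            rw [hlenα] at hylen
            have hjr : j ≠ r := by
              intro h
              rw [h] at hj
              simp at hj
            have hj2 : (i₀, r).2 < j := hj
            have hxp' : i₀ - 1 ≤ part α' j := by
              rw [← hpα_ne j hy hjr]
              exact hxp
            have hne' : part α' j ≠ i₀ - 1 := htop j (by exact hj2) hylen
            refine mem_cd.mpr ⟨hi₀, hy, by rw [hlenα]; omega, ?_⟩
            rw [hpα_ne j hy hjr]
            omega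
          · -- (i₀ + 1, r) ∉ cd α
            intro h
            have := (mem_cd.mp h).2.2.2
            rw [show ((i₀, r) : ℕ × ℕ).2 = r from rfl] at this
            rw [hpα_eq] at this
            omega
          · -- i₀ = 1 impossible
            exact fun h => absurd (show i₀ = 1 from h) (by omega)
      have hαsum : α.sum = n := hαpk.1.2
      set T := Function.update T' b n with hTdef
      have hTmem : IsSPYCT α T :=
        SPYCT_add hT'mem hα'sum hαsum hn hcdα hbα' hαpk hdom hnr hntop
      -- column count of the new column
      have hm : c l'' i₀ = j₀ - 1 := by
        have h1 : (cd l'').filter (fun p => p.1 = i₀) =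
            ((cd l).filter (fun p => p.1 = i₀)).erase (i₀, j₀) := by
          rw [hcdl'', Finset.filter_erase]
        have h2 : ((i₀, j₀) : ℕ × ℕ) ∈ (cd l).filter (fun p => p.1 = i₀) :=
          Finset.mem_filter.mpr ⟨hbumem, rfl⟩
        have h3 := Finset.card_erase_of_mem h2
        rw [← h1, card_col hi₀, card_col hi₀] at h3
        rw [h3, ← hjc]
      have hL : cd l = insert (i₀, j₀) (cd l'') := by
        rw [hcdl'', Finset.insert_erase hbumem]
      have hbL : ((i₀, j₀) : ℕ × ℕ) ∉ cd l'' := by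
        rw [hcdl'']; exact Finset.notMem_erase _ _
      have h4 : ∀ p ∈ cd α', T' p < n := by
        intro p hp
        have := (sf_mem_Icc hT'SF hp).2
        rw [hα'sum] at this
        omega
      have h6 : ((cd α').filter (fun p => p.1 = (i₀, j₀).1)).card = j₀ - 1 := by
        show ((cd α').filter (fun p => p.1 = i₀)).card = j₀ - 1
        rw [card_col hi₀, c_perm hα'perm, hm]
      have h7 : ∀ p ∈ cd l'', p.1 = (i₀, j₀).1 → p.2 ≤ j₀ - 1 := by
        intro p hp hp1
        obtain ⟨x, y⟩ := p
        have hx : 1 ≤ x := (mem_cd.mp hp).1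
        have hy : 1 ≤ y := (mem_cd.mp hp).2.1
        rw [mem_cd_sorted hl''sorted hl''pos hx hy] at hp
        simp only at hp1
        rw [hp1] at hp
        rw [hm] at hp
        exact hp
      have heq : colSortTo l α T = Function.update (colSortTo l'' α' T') (i₀, j₀) n :=
        colSort_update hcdα hbα' hL hbL hb1 (show (i₀, j₀).2 = (j₀ - 1) + 1 by
          show j₀ = j₀ - 1 + 1; omega) hTdef h4 hT'SF.1.injOn h6 h7
      have hUid : Function.update U'' (i₀, j₀) n = U := by
        funext q
        rcases eq_or_ne q (i₀, j₀) with rfl | hq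
        · rw [Function.update_self, hbuval]
        · rw [Function.update_of_ne hq, hU''def, Function.update_of_ne hq]
      refine ⟨α, hαpk, hαperm, T, hTmem, ?_⟩
      rw [heq, ← hU''eq, hUid]

end PaperSPIT
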